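/- If F = f + iw + ju + kv : ℍⁿ → ℍ is continuously differentiable and regular (i.e., D̄_α F = (∂_{t^α} + i∂_{x^α} + j∂_{y^α} + k∂_{z^α})F = 0 for all α), then its real part f satisfies D̄_β D_α f = 0 for all α, β, where D_α = ∂_{t^α} - i∂_{x^α} - j∂_{y^α} - k∂_{z^α}. -/

import Mathlib

open scoped Quaternion


/-- The quaternion unit `i`. -/
def qI : ℍ[ℝ] := ⟨0, 1, 0, 0⟩
/-- The quaternion unit `j`. -/
def qJ : ℍ[ℝ] := ⟨0, 0, 1, 0⟩
/-- The quaternion unit `k`. -/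
def qK : ℍ[ℝ] := ⟨0, 0, 0, 1⟩

/-- Points of `ℍⁿ ≅ ℝ^{4n}`, with `qᵅ = tᵅ + i xᵅ + j yᵅ + k zᵅ`. -/
abbrev QPt (n : ℕ) := Fin n → ℝ × ℝ × ℝ × ℝ

/-- The coordinate basis vector in the direction of the `m`-th real coordinate of the
`α`-th quaternionic variable (`m = 0,1,2,3` for `t,x,y,z`). -/
def qBase {n : ℕ} (α : Fin n) (m : Fin 4) : QPt n := fun β =>
  if β = α then
    (match m with
      | 0 => ((1:ℝ), 0, 0, 0)
      | 1 => (0, (1:ℝ), 0, 0)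
      | 2 => (0, 0, (1:ℝ), 0)
      | 3 => (0, 0, 0, (1:ℝ)))
  else 0

/-- Partial derivative of a real-valued function in direction `v`. -/
noncomputable def pdR {n : ℕ} (v : QPt n) (f : QPt n → ℝ) : QPt n → ℝ :=
  fun p => fderiv ℝ f p v

/-- Partial derivative of a quaternion-valued function in direction `v`. -/
noncomputable def pdQ {n : ℕ} (v : QPt n) (F : QPt n → ℍ[ℝ]) : QPt n → ℍ[ℝ] :=
  fun p => fderiv ℝ F p v

/-- `D_α f = ∂_{tᵅ}f - i ∂_{xᵅ}f - j ∂_{yᵅ}f - k ∂_{zᵅ}f` for a real function `f`. -/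
noncomputable def Dlow {n : ℕ} (α : Fin n) (f : QPt n → ℝ) : QPt n → ℍ[ℝ] :=
  fun p => ⟨pdR (qBase α 0) f p, -(pdR (qBase α 1) f p),
    -(pdR (qBase α 2) f p), -(pdR (qBase α 3) f p)⟩

/-- `D̄_β f = ∂_{tᵝ}f + i ∂_{xᵝ}f + j ∂_{yᵝ}f + k ∂_{zᵝ}f` for a real function `f`. -/
noncomputable def DbarLow {n : ℕ} (β : Fin n) (f : QPt n → ℝ) : QPt n → ℍ[ℝ] :=
  fun p => ⟨pdR (qBase β 0) f p, pdR (qBase β 1) f p,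
    pdR (qBase β 2) f p, pdR (qBase β 3) f p⟩

/-- `D̄_β G = ∂_{tᵝ}G + i ∂_{xᵝ}G + j ∂_{yᵝ}G + k ∂_{zᵝ}G` for a quaternion-valued `G`. -/
noncomputable def DbarQ {n : ℕ} (β : Fin n) (G : QPt n → ℍ[ℝ]) : QPt n → ℍ[ℝ] :=
  fun p => pdQ (qBase β 0) G p + qI * pdQ (qBase β 1) G p +
    qJ * pdQ (qBase β 2) G p +
    qK * pdQ (qBase β 3) G p

/-- `D_α G = ∂_{tᵅ}G - i ∂_{xᵅ}G - j ∂_{yᵅ}G - k ∂_{zᵅ}G` for a quaternion-valued `G`. -/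
noncomputable def DQ {n : ℕ} (α : Fin n) (G : QPt n → ℍ[ℝ]) : QPt n → ℍ[ℝ] :=
  fun p => pdQ (qBase α 0) G p - qI * pdQ (qBase α 1) G p -
    qJ * pdQ (qBase α 2) G p -
    qK * pdQ (qBase α 3) G p

lemma pd_diff {n : ℕ} {g : QPt n → ℝ} (hg : ContDiff ℝ 2 g) (w : QPt n) :
    Differentiable ℝ (pdR w g) := by
  have h1 : ContDiff ℝ 1 (fderiv ℝ g) := hg.fderiv_right (by norm_num)
  exact fun p =>
    (ContinuousLinearMap.apply ℝ ℝ w).differentiableAt.comp p ((h1.differentiable one_ne_zero) p)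

lemma pd_symm {n : ℕ} {g : QPt n → ℝ} (hg : ContDiff ℝ 2 g) (v w p : QPt n) :
    pdR v (pdR w g) p = pdR w (pdR v g) p := by
  have h1 : ContDiff ℝ 1 (fderiv ℝ g) := hg.fderiv_right (by norm_num)
  have key : ∀ u u' : QPt n, pdR u (pdR u' g) p = fderiv ℝ (fderiv ℝ g) p u u' := by
    intro u u'
    have h2 : pdR u' g = (ContinuousLinearMap.apply ℝ ℝ u') ∘ (fderiv ℝ g) := rfl
    simp only [pdR, h2]
    rw [fderiv_comp p (ContinuousLinearMap.differentiableAt _) ((h1.differentiable one_ne_zero) p),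
      ContinuousLinearMap.fderiv]
    rfl
  rw [key, key]
  exact (hg.contDiffAt.isSymmSndFDerivAt (by simp)) v w

lemma pd_comb {n : ℕ} {b c d : QPt n → ℝ} (hb : Differentiable ℝ b) (hc : Differentiable ℝ c)
    (hd : Differentiable ℝ d) (s1 s2 s3 : ℝ) (a : QPt n → ℝ)
    (h : ∀ p, a p = s1 * b p + s2 * c p + s3 * d p) (v p : QPt n) :
    pdR v a p = s1 * pdR v b p + s2 * pdR v c p + s3 * pdR v d p := by
  have ha : a = fun p => s1 * b p + s2 * c p + s3 * d p := funext h
  simp only [pdR, ha]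
  rw [fderiv_fun_add (((hb p).const_mul s1).fun_add ((hc p).const_mul s2)) ((hd p).const_mul s3),
    fderiv_fun_add ((hb p).const_mul s1) ((hc p).const_mul s2),
    fderiv_const_mul (hb p), fderiv_const_mul (hc p), fderiv_const_mul (hd p)]
  simp

lemma pd_neg {n : ℕ} (x : QPt n → ℝ) (v p : QPt n) :
    pdR v (fun q => -(x q)) p = -(pdR v x p) := by
  simp [pdR, fderiv_neg]

lemma pdQ_mk {n : ℕ} {a b c d : QPt n → ℝ} (ha : Differentiable ℝ a) (hb : Differentiable ℝ b)
    (hc : Differentiable ℝ c) (hd : Differentiable ℝ d) (v p : QPt n) :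
    pdQ v (fun q => (⟨a q, b q, c q, d q⟩ : ℍ[ℝ])) p
      = ⟨pdR v a p, pdR v b p, pdR v c p, pdR v d p⟩ := by
  have h : (fun q => (⟨a q, b q, c q, d q⟩ : ℍ[ℝ]))
      = fun q => a q • (1:ℍ[ℝ]) + (b q • qI + (c q • qJ + d q • qK)) := by
    funext q; ext <;> simp [Quaternion.re_smul] <;> simp [qI, qJ, qK]
  simp only [pdQ, h]
  rw [fderiv_fun_add ((ha p).smul_const _) (((hb p).smul_const _).fun_add
      (((hc p).smul_const _).fun_add ((hd p).smul_const _))),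
    fderiv_fun_add ((hb p).smul_const _) (((hc p).smul_const _).fun_add ((hd p).smul_const _)),
    fderiv_fun_add ((hc p).smul_const _) ((hd p).smul_const _),
    fderiv_smul_const (ha p), fderiv_smul_const (hb p), fderiv_smul_const (hc p),
    fderiv_smul_const (hd p)]
  ext <;> simp [pdR, Quaternion.re_smul] <;> simp [qI, qJ, qK]

def mkQ (a b c d : ℝ) : ℍ[ℝ] := ⟨a, b, c, d⟩

lemma toMkQ (a b c d : ℝ) : (⟨a, b, c, d⟩ : ℍ[ℝ]) = mkQ a b c d := rfl
@[simp] lemma mkQ_re (a b c d : ℝ) : (mkQ a b c d).re = a := rfl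
@[simp] lemma mkQ_imI (a b c d : ℝ) : (mkQ a b c d).imI = b := rfl
@[simp] lemma mkQ_imJ (a b c d : ℝ) : (mkQ a b c d).imJ = c := rfl
@[simp] lemma mkQ_imK (a b c d : ℝ) : (mkQ a b c d).imK = d := rfl

noncomputable def piRe : ℍ[ℝ] →L[ℝ] ℝ := ⟨QuaternionAlgebra.reₗ _ _ _, Quaternion.continuous_re⟩
noncomputable def piI : ℍ[ℝ] →L[ℝ] ℝ := ⟨QuaternionAlgebra.imIₗ _ _ _, Quaternion.continuous_imI⟩
noncomputable def piJ : ℍ[ℝ] →L[ℝ] ℝ := ⟨QuaternionAlgebra.imJₗ _ _ _, Quaternion.continuous_imJ⟩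
noncomputable def piK : ℍ[ℝ] →L[ℝ] ℝ := ⟨QuaternionAlgebra.imKₗ _ _ _, Quaternion.continuous_imK⟩

/-- If `F = f + iw + ju + kv : ℍⁿ → ℍ` is `C²` and regular (`D̄_α F = 0` for all `α`),
then its real part `f` satisfies `D̄_β D_α f = 0` for all `α, β`. -/
theorem real_part_of_regular {n : ℕ} (F : QPt n → ℍ[ℝ]) (hF : ContDiff ℝ 2 F)
    (hreg : ∀ α : Fin n, DbarQ α F = 0) :
    ∀ α β : Fin n, DbarQ β (Dlow α (fun p => (F p).re)) = 0 := by
  intro α β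
  set g0 : QPt n → ℝ := fun q => (F q).re with hg0def
  set g1 : QPt n → ℝ := fun q => (F q).imI with hg1def
  set g2 : QPt n → ℝ := fun q => (F q).imJ with hg2def
  set g3 : QPt n → ℝ := fun q => (F q).imK with hg3def
  have hg0 : ContDiff ℝ 2 g0 := piRe.contDiff.comp hF
  have hg1 : ContDiff ℝ 2 g1 := piI.contDiff.comp hF
  have hg2 : ContDiff ℝ 2 g2 := piJ.contDiff.comp hF
  have hg3 : ContDiff ℝ 2 g3 := piK.contDiff.comp hF
  have hd0 : Differentiable ℝ g0 := hg0.differentiable two_ne_zero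
  have hd1 : Differentiable ℝ g1 := hg1.differentiable two_ne_zero
  have hd2 : Differentiable ℝ g2 := hg2.differentiable two_ne_zero
  have hd3 : Differentiable ℝ g3 := hg3.differentiable two_ne_zero
  have hFmk : F = fun q => (⟨g0 q, g1 q, g2 q, g3 q⟩ : ℍ[ℝ]) := rfl
  -- the Cauchy–Riemann–Fueter equations for the components of `F`
  have crf : ∀ (γ : Fin n) (q : QPt n),
      (pdR (qBase γ 0) g0 q = pdR (qBase γ 1) g1 q + pdR (qBase γ 2) g2 q + pdR (qBase γ 3) g3 q)
      ∧ (pdR (qBase γ 0) g1 q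
          = -pdR (qBase γ 1) g0 q - pdR (qBase γ 2) g3 q + pdR (qBase γ 3) g2 q)
      ∧ (pdR (qBase γ 0) g2 q
          = pdR (qBase γ 1) g3 q - pdR (qBase γ 2) g0 q - pdR (qBase γ 3) g1 q)
      ∧ (pdR (qBase γ 0) g3 q
          = -pdR (qBase γ 1) g2 q + pdR (qBase γ 2) g1 q - pdR (qBase γ 3) g0 q) := by
    intro γ q
    have h := congrFun (hreg γ) q
    simp only [DbarQ, Pi.zero_apply] at h
    rw [hFmk] at h
    rw [pdQ_mk hd0 hd1 hd2 hd3, pdQ_mk hd0 hd1 hd2 hd3, pdQ_mk hd0 hd1 hd2 hd3,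
      pdQ_mk hd0 hd1 hd2 hd3] at h
    simp only [toMkQ] at h
    rw [Quaternion.ext_iff] at h
    simp only [Quaternion.re_mul, Quaternion.imI_mul, Quaternion.imJ_mul,
      Quaternion.imK_mul, Quaternion.re_add, Quaternion.imI_add, Quaternion.imJ_add,
      Quaternion.imK_add, Quaternion.re_zero, Quaternion.imI_zero, Quaternion.imJ_zero,
      Quaternion.imK_zero, mkQ_re, mkQ_imI, mkQ_imJ, mkQ_imK] at h
    simp only [qI, qJ, qK] at h
    obtain ⟨h0, h1, h2, h3⟩ := h
    refine ⟨by linarith, by linarith, by linarith, by linarith⟩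
  have D0 : ∀ (γ : Fin n) (v q : QPt n),
      pdR v (pdR (qBase γ 0) g0) q = 1 * pdR v (pdR (qBase γ 1) g1) q
        + 1 * pdR v (pdR (qBase γ 2) g2) q + 1 * pdR v (pdR (qBase γ 3) g3) q :=
    fun γ v q => pd_comb (pd_diff hg1 _) (pd_diff hg2 _) (pd_diff hg3 _) 1 1 1 _
      (fun r => by have h := (crf γ r).1; linarith) v q
  have D1 : ∀ (γ : Fin n) (v q : QPt n),
      pdR v (pdR (qBase γ 0) g1) q = (-1) * pdR v (pdR (qBase γ 1) g0) q
        + (-1) * pdR v (pdR (qBase γ 2) g3) q + 1 * pdR v (pdR (qBase γ 3) g2) q :=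
    fun γ v q => pd_comb (pd_diff hg0 _) (pd_diff hg3 _) (pd_diff hg2 _) (-1) (-1) 1 _
      (fun r => by have h := (crf γ r).2.1; linarith) v q
  have D2 : ∀ (γ : Fin n) (v q : QPt n),
      pdR v (pdR (qBase γ 0) g2) q = 1 * pdR v (pdR (qBase γ 1) g3) q
        + (-1) * pdR v (pdR (qBase γ 2) g0) q + (-1) * pdR v (pdR (qBase γ 3) g1) q :=
    fun γ v q => pd_comb (pd_diff hg3 _) (pd_diff hg0 _) (pd_diff hg1 _) 1 (-1) (-1) _
      (fun r => by have h := (crf γ r).2.2.1; linarith) v q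
  have D3 : ∀ (γ : Fin n) (v q : QPt n),
      pdR v (pdR (qBase γ 0) g3) q = (-1) * pdR v (pdR (qBase γ 1) g2) q
        + 1 * pdR v (pdR (qBase γ 2) g1) q + (-1) * pdR v (pdR (qBase γ 3) g0) q :=
    fun γ v q => pd_comb (pd_diff hg2 _) (pd_diff hg1 _) (pd_diff hg0 _) (-1) 1 (-1) _
      (fun r => by have h := (crf γ r).2.2.2; linarith) v q
  funext p
  have hDlow : Dlow α g0 = fun q => (⟨pdR (qBase α 0) g0 q, -(pdR (qBase α 1) g0 q),
      -(pdR (qBase α 2) g0 q), -(pdR (qBase α 3) g0 q)⟩ : ℍ[ℝ]) := rfl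
  have hmk : ∀ v : QPt n, pdQ v (Dlow α g0) p
      = ⟨pdR v (pdR (qBase α 0) g0) p, -(pdR v (pdR (qBase α 1) g0) p),
        -(pdR v (pdR (qBase α 2) g0) p), -(pdR v (pdR (qBase α 3) g0) p)⟩ := by
    intro v
    rw [hDlow, pdQ_mk (pd_diff hg0 _) ((pd_diff hg0 _).fun_neg) ((pd_diff hg0 _).fun_neg)
      ((pd_diff hg0 _).fun_neg), pd_neg, pd_neg, pd_neg]
  simp only [DbarQ, Pi.zero_apply]
  rw [hmk, hmk, hmk, hmk, Quaternion.ext_iff]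
  simp only [toMkQ]
  simp only [Quaternion.re_mul, Quaternion.imI_mul, Quaternion.imJ_mul,
    Quaternion.imK_mul, Quaternion.re_add, Quaternion.imI_add, Quaternion.imJ_add,
    Quaternion.imK_add, Quaternion.re_zero, Quaternion.imI_zero, Quaternion.imJ_zero,
    Quaternion.imK_zero, mkQ_re, mkQ_imI, mkQ_imJ, mkQ_imK]
  simp only [qI, qJ, qK]
  refine ⟨?_, ?_, ?_, ?_⟩
  · linarith [D0 α (qBase β 0) p,
      D1 α (qBase β 1) p,
      D2 α (qBase β 2) p,
      D3 α (qBase β 3) p,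
      D0 β (qBase α 0) p,
      D1 β (qBase α 1) p,
      D2 β (qBase α 2) p,
      D3 β (qBase α 3) p,
      pd_symm hg0 (qBase β 0) (qBase α 0) p,
      pd_symm hg0 (qBase β 1) (qBase α 1) p,
      pd_symm hg0 (qBase β 2) (qBase α 2) p,
      pd_symm hg0 (qBase β 3) (qBase α 3) p,
      pd_symm hg1 (qBase β 0) (qBase α 1) p,
      pd_symm hg1 (qBase β 1) (qBase α 0) p,
      pd_symm hg1 (qBase β 2) (qBase α 3) p,
      pd_symm hg1 (qBase β 3) (qBase α 2) p,
      pd_symm hg2 (qBase β 0) (qBase α 2) p,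
      pd_symm hg2 (qBase β 1) (qBase α 3) p,
      pd_symm hg2 (qBase β 2) (qBase α 0) p,
      pd_symm hg2 (qBase β 3) (qBase α 1) p,
      pd_symm hg3 (qBase β 0) (qBase α 3) p,
      pd_symm hg3 (qBase β 1) (qBase α 2) p,
      pd_symm hg3 (qBase β 2) (qBase α 1) p,
      pd_symm hg3 (qBase β 3) (qBase α 0) p]
  · linarith [D0 α (qBase β 1) p,
      D1 α (qBase β 0) p,
      D2 α (qBase β 3) p,
      D3 α (qBase β 2) p,
      D0 β (qBase α 1) p,
      D1 β (qBase α 0) p,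
      D2 β (qBase α 3) p,
      D3 β (qBase α 2) p,
      pd_symm hg0 (qBase β 0) (qBase α 1) p,
      pd_symm hg0 (qBase β 1) (qBase α 0) p,
      pd_symm hg0 (qBase β 2) (qBase α 3) p,
      pd_symm hg0 (qBase β 3) (qBase α 2) p,
      pd_symm hg1 (qBase β 0) (qBase α 0) p,
      pd_symm hg1 (qBase β 1) (qBase α 1) p,
      pd_symm hg1 (qBase β 2) (qBase α 2) p,
      pd_symm hg1 (qBase β 3) (qBase α 3) p,
      pd_symm hg2 (qBase β 0) (qBase α 3) p,
      pd_symm hg2 (qBase β 1) (qBase α 2) p,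
      pd_symm hg2 (qBase β 2) (qBase α 1) p,
      pd_symm hg2 (qBase β 3) (qBase α 0) p,
      pd_symm hg3 (qBase β 0) (qBase α 2) p,
      pd_symm hg3 (qBase β 1) (qBase α 3) p,
      pd_symm hg3 (qBase β 2) (qBase α 0) p,
      pd_symm hg3 (qBase β 3) (qBase α 1) p]
  · linarith [D0 α (qBase β 2) p,
      D1 α (qBase β 3) p,
      D2 α (qBase β 0) p,
      D3 α (qBase β 1) p,
      D0 β (qBase α 2) p,
      D1 β (qBase α 3) p,
      D2 β (qBase α 0) p,
      D3 β (qBase α 1) p,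
      pd_symm hg0 (qBase β 0) (qBase α 2) p,
      pd_symm hg0 (qBase β 1) (qBase α 3) p,
      pd_symm hg0 (qBase β 2) (qBase α 0) p,
      pd_symm hg0 (qBase β 3) (qBase α 1) p,
      pd_symm hg1 (qBase β 0) (qBase α 3) p,
      pd_symm hg1 (qBase β 1) (qBase α 2) p,
      pd_symm hg1 (qBase β 2) (qBase α 1) p,
      pd_symm hg1 (qBase β 3) (qBase α 0) p,
      pd_symm hg2 (qBase β 0) (qBase α 0) p,
      pd_symm hg2 (qBase β 1) (qBase α 1) p,
      pd_symm hg2 (qBase β 2) (qBase α 2) p,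
      pd_symm hg2 (qBase β 3) (qBase α 3) p,
      pd_symm hg3 (qBase β 0) (qBase α 1) p,
      pd_symm hg3 (qBase β 1) (qBase α 0) p,
      pd_symm hg3 (qBase β 2) (qBase α 3) p,
      pd_symm hg3 (qBase β 3) (qBase α 2) p]
  · linarith [D0 α (qBase β 3) p,
      D1 α (qBase β 2) p,
      D2 α (qBase β 1) p,
      D3 α (qBase β 0) p,
      D0 β (qBase α 3) p,
      D1 β (qBase α 2) p,
      D2 β (qBase α 1) p,
      D3 β (qBase α 0) p,
      pd_symm hg0 (qBase β 0) (qBase α 3) p,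
      pd_symm hg0 (qBase β 1) (qBase α 2) p,
      pd_symm hg0 (qBase β 2) (qBase α 1) p,
      pd_symm hg0 (qBase β 3) (qBase α 0) p,
      pd_symm hg1 (qBase β 0) (qBase α 2) p,
      pd_symm hg1 (qBase β 1) (qBase α 3) p,
      pd_symm hg1 (qBase β 2) (qBase α 0) p,
      pd_symm hg1 (qBase β 3) (qBase α 1) p,
      pd_symm hg2 (qBase β 0) (qBase α 1) p,
      pd_symm hg2 (qBase β 1) (qBase α 0) p,
      pd_symm hg2 (qBase β 2) (qBase α 3) p,
      pd_symm hg2 (qBase β 3) (qBase α 2) p,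
      pd_symm hg3 (qBase β 0) (qBase α 0) p,
      pd_symm hg3 (qBase β 1) (qBase α 1) p,
      pd_symm hg3 (qBase β 2) (qBase α 2) p,
      pd_symm hg3 (qBase β 3) (qBase α 3) p]
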